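/- Suppose (ψ,z) ∈ Λ^b(Y,X), i.e. z_t + ψ_t Y_t − z_{t+1} ∈ Q_t for t = 0,…,T−1 and z_t + ψ_t Y_t + ψ*_{t+1} X_t ∈ Q_t for t = 0,…,T (z predictable, z_{T+1} = 0). Then for every t: on {ψ*_t > 0}, z_t ∈ ψ*_t Z^b_t; on {ψ*_t = 0}, z_t ∈ Q_t, where Z^b_T := −Y_T + Q_T, W^b_t := Z^b_{t+1} ∩ L_t, V^b_t := W^b_t + Q_t, Z^b_t := conv{V^b_t ∩ (−X_t + Q_t), −Y_t + Q_t}. -/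

import Mathlib

open Pointwise

/-- Auxiliary backward recursion for the buyer's construction: `buyerZ T L Q Y X n`
is the set 𝒵ᵇ_{T−n}, i.e. 𝒵ᵇ_T = −Y_T + Q_T and, for t = T−(n+1),
𝒵ᵇ_t = conv{((𝒵ᵇ_{t+1} ∩ L_t) + Q_t) ∩ (−X_t + Q_t), −Y_t + Q_t}. -/
def buyerZ {V : Type*} [AddCommGroup V] [Module ℝ V]
    (T : ℕ) (L Q : ℕ → Set V) (Y X : ℕ → V) : ℕ → Set V
  | 0 => {-Y T} + Q T
  | n + 1 =>
      convexHull ℝ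
        (((((buyerZ T L Q Y X n ∩ L (T - (n + 1))) + Q (T - (n + 1)))
              ∩ ({-X (T - (n + 1))} + Q (T - (n + 1)))))
          ∪ ({-Y (T - (n + 1))} + Q (T - (n + 1))))

lemma buyerZ_zero {V : Type*} [AddCommGroup V] [Module ℝ V]
    (T : ℕ) (L Q : ℕ → Set V) (Y X : ℕ → V) :
    buyerZ T L Q Y X 0 = {-Y T} + Q T := rfl

lemma buyerZ_succ {V : Type*} [AddCommGroup V] [Module ℝ V]
    (T : ℕ) (L Q : ℕ → Set V) (Y X : ℕ → V) (n : ℕ) :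
    buyerZ T L Q Y X (n + 1) =
      convexHull ℝ
        (((((buyerZ T L Q Y X n ∩ L (T - (n + 1))) + Q (T - (n + 1)))
              ∩ ({-X (T - (n + 1))} + Q (T - (n + 1)))))
          ∪ ({-Y (T - (n + 1))} + Q (T - (n + 1)))) := rfl

/-- If (ψ,z) ∈ Λᵇ(Y,X), i.e. z_t + ψ_t Y_t − z_{t+1} ∈ Q_t for t < T and
z_t + ψ_t Y_t + ψ*_{t+1} X_t ∈ Q_t for t ≤ T, with z predictable and z_{T+1} = 0,
then for every t ≤ T: z_t ∈ ψ*_t 𝒵ᵇ_t when ψ*_t > 0, and z_t ∈ Q_t when ψ*_t = 0. -/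
theorem stmt13 {V : Type*} [AddCommGroup V] [Module ℝ V] (T : ℕ)
    (L : ℕ → Submodule ℝ V) (Q : ℕ → Set V)
    (hQconv : ∀ t, Convex ℝ (Q t))
    (hQ0 : ∀ t, (0 : V) ∈ Q t)
    (hQadd : ∀ t, Q t + Q t = Q t)
    (hQsmul : ∀ t, ∀ c : ℝ, 0 < c → c • Q t = Q t)
    (hQL : ∀ t, Q (t + 1) ∩ (L t : Set V) ⊆ Q t)
    (Y X : ℕ → V) (ψ : ℕ → ℝ)
    (hψ : ∀ t ≤ T, 0 ≤ ψ t)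
    (hψsum : ∑ t ∈ Finset.range (T + 1), ψ t = 1)
    (z : ℕ → V) (hzT : z (T + 1) = 0)
    (hpred : ∀ t ≤ T, z (t + 1) ∈ L t)
    (h1 : ∀ t < T, z t + ψ t • Y t - z (t + 1) ∈ Q t)
    (h2 : ∀ t ≤ T, z t + ψ t • Y t + (∑ s ∈ Finset.Icc (t + 1) T, ψ s) • X t ∈ Q t) :
    ∀ t ≤ T,
      (0 < (∑ s ∈ Finset.Icc t T, ψ s) →
          z t ∈ (∑ s ∈ Finset.Icc t T, ψ s) •
            buyerZ T (fun u => (L u : Set V)) Q Y X (T - t)) ∧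
        ((∑ s ∈ Finset.Icc t T, ψ s) = 0 → z t ∈ Q t) := by
  suffices H : ∀ n t, t + n = T →
      ((0 < (∑ s ∈ Finset.Icc t T, ψ s) →
          z t ∈ (∑ s ∈ Finset.Icc t T, ψ s) •
            buyerZ T (fun u => (L u : Set V)) Q Y X n) ∧
        ((∑ s ∈ Finset.Icc t T, ψ s) = 0 → z t ∈ Q t)) by
    intro t ht
    exact H (T - t) t (by omega)
  intro n
  induction n with
  | zero =>
    intro t ht
    have htT : t = T := by omega
    subst htT
    have hsum : ∑ s ∈ Finset.Icc t t, ψ s = ψ t := by simp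
    have hemp : (∑ s ∈ Finset.Icc (t + 1) t, ψ s) = 0 := by
      rw [Finset.Icc_eq_empty (by omega)]; simp
    have hq := h2 t le_rfl
    rw [hemp, zero_smul, add_zero] at hq
    rw [hsum]
    constructor
    · intro hpos
      have hinv : (ψ t)⁻¹ • (z t + ψ t • Y t) ∈ Q t :=
        (hQsmul t (ψ t)⁻¹ (inv_pos.mpr hpos)) ▸ Set.smul_mem_smul_set hq
      have hmem : -Y t + (ψ t)⁻¹ • (z t + ψ t • Y t) ∈
          buyerZ t (fun u => (L u : Set V)) Q Y X 0 := by
        rw [buyerZ_zero]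
        exact Set.add_mem_add rfl hinv
      have hz : z t = ψ t • (-Y t + (ψ t)⁻¹ • (z t + ψ t • Y t)) := by
        rw [smul_add, smul_inv_smul₀ (ne_of_gt hpos), smul_neg]
        abel
      rw [hz]
      exact Set.smul_mem_smul_set hmem
    · intro h0
      rw [h0, zero_smul, add_zero] at hq
      exact hq
  | succ n ih =>
    intro t ht
    have htT : t < T := by omega
    have hTt : T - (n + 1) = t := by omega
    have hsplit : ∑ s ∈ Finset.Icc t T, ψ s
        = ψ t + ∑ s ∈ Finset.Icc (t + 1) T, ψ s := by
      rw [Finset.Icc_eq_cons_Ioc (le_of_lt htT), Finset.sum_cons, Finset.Icc_add_one_left_eq_Ioc]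
    have ha : 0 ≤ ψ t := hψ t (le_of_lt htT)
    have hb : 0 ≤ ∑ s ∈ Finset.Icc (t + 1) T, ψ s :=
      Finset.sum_nonneg fun s hs => hψ s (Finset.mem_Icc.mp hs).2
    set b : ℝ := ∑ s ∈ Finset.Icc (t + 1) T, ψ s with hbdef
    constructor
    · intro hpos
      rw [hsplit] at hpos ⊢
      rw [buyerZ_succ, hTt]
      by_cases hb0 : b = 0
      · -- no mass after t : use the second node of the convex hull
        have ha0 : 0 < ψ t := by rw [hb0, add_zero] at hpos; exact hpos
        have hq := h2 t (le_of_lt htT)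
        rw [← hbdef, hb0, zero_smul, add_zero] at hq
        have hinv : (ψ t)⁻¹ • (z t + ψ t • Y t) ∈ Q t :=
          (hQsmul t (ψ t)⁻¹ (inv_pos.mpr ha0)) ▸ Set.smul_mem_smul_set hq
        have hmem : -Y t + (ψ t)⁻¹ • (z t + ψ t • Y t) ∈ ({-Y t} + Q t) :=
          Set.add_mem_add rfl hinv
        have hz : z t = (ψ t + b) • (-Y t + (ψ t)⁻¹ • (z t + ψ t • Y t)) := by
          rw [hb0, add_zero, smul_add, smul_inv_smul₀ (ne_of_gt ha0), smul_neg]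
          abel
        rw [hz]
        exact Set.smul_mem_smul_set
          ((subset_convexHull ℝ _) (Or.inr hmem))
      · have hbpos : 0 < b := lt_of_le_of_ne hb (Ne.symm hb0)
        obtain ⟨hIH1, _⟩ := ih (t + 1) (by omega)
        have hz1 := hIH1 (by rw [← hbdef]; exact hbpos)
        rw [← hbdef] at hz1
        obtain ⟨w, hw, hbw⟩ := Set.mem_smul_set.mp hz1
        have hweq : w = b⁻¹ • z (t + 1) := by
          rw [← hbw, inv_smul_smul₀ (ne_of_gt hbpos)]
        have hwL : w ∈ (L t : Set V) := by
          rw [hweq]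
          exact Submodule.smul_mem _ _ (hpred t (le_of_lt htT))
        have hq1 := h1 t htT
        have hq2 := h2 t (le_of_lt htT)
        rw [← hbdef] at hq2
        have hbinv : ∀ q ∈ Q t, b⁻¹ • q ∈ Q t := fun q hq =>
          (hQsmul t b⁻¹ (inv_pos.mpr hbpos)) ▸ Set.smul_mem_smul_set hq
        set v : V := b⁻¹ • (z t + ψ t • Y t) with hvdef
        have hvA : v ∈ ((buyerZ T (fun u => (L u : Set V)) Q Y X n
            ∩ (L t : Set V)) + Q t) := by
          have he : v = w + b⁻¹ • (z t + ψ t • Y t - z (t + 1)) := by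
            rw [hvdef, hweq]
            match_scalars <;> field_simp <;> ring
          rw [he]
          exact Set.add_mem_add ⟨hw, hwL⟩ (hbinv _ hq1)
        have hvB : v ∈ ({-X t} + Q t) := by
          have he : v = -X t + b⁻¹ • (z t + ψ t • Y t + b • X t) := by
            rw [hvdef]
            match_scalars <;> field_simp <;> ring
          rw [he]
          exact Set.add_mem_add rfl (hbinv _ hq2)
        have hY : -Y t ∈ ({-Y t} + Q t) :=
          ⟨-Y t, rfl, 0, hQ0 t, add_zero _⟩
        set C := convexHull ℝ
          ((((buyerZ T (fun u => (L u : Set V)) Q Y X n ∩ (L t : Set V)) + Q t)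
              ∩ ({-X t} + Q t))
            ∪ ({-Y t} + Q t)) with hCdef
        have hvC : v ∈ C := (subset_convexHull ℝ _) (Or.inl ⟨hvA, hvB⟩)
        have hYC : -Y t ∈ C := (subset_convexHull ℝ _) (Or.inr hY)
        have hsne : ψ t + b ≠ 0 := ne_of_gt hpos
        have hcomb : (b / (ψ t + b)) • v + (ψ t / (ψ t + b)) • (-Y t) ∈ C :=
          (convex_convexHull ℝ _) hvC hYC (by positivity) (by positivity)
            (by field_simp; ring)
        have hz : z t = (ψ t + b) •
            ((b / (ψ t + b)) • v + (ψ t / (ψ t + b)) • (-Y t)) := by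
          rw [hvdef]
          match_scalars <;> field_simp <;> ring
        rw [hz]
        exact Set.smul_mem_smul_set hcomb
    · intro h0
      rw [hsplit] at h0
      have ha0 : ψ t = 0 := by linarith
      have hb0 : b = 0 := by linarith
      have hq := h2 t (le_of_lt htT)
      rw [← hbdef, ha0, hb0, zero_smul, zero_smul, add_zero, add_zero] at hq
      exact hq
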